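/- Let α > 0 be a real number and let S₊ ⊂ S^{n−1} be a measurable subset of the unit sphere with the following Poincaré-type property: for all v ∈ H¹₀(S₊), ∫ |∇_{S} v|² dσ ≥ (1/α) ∫ v² dσ. Let β = (√α/2)(√((n−2)² + 4/α) − (n−2)) ∈ (0,1) and γ = β/√α. Then for every smooth function u on S^{n−1} vanishing outside S₊ and every measurable vector field of the form ∇u = (∂_ρ u) x̂ + ∇_S u (orthogonal decomposition), one has ∫_{S^{n−1}} (|∂_ρ u|² + |∇_S u|²) dσ ≥ γ ( 2∫_{S^{n−1}} |u · ∂_ρ u| dσ + (n−2) ∫_{S^{n−1}} u² dσ ). -/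

import Mathlib

open MeasureTheory Real

/-- An abstract form of the spherical eigenvalue estimate: on a measure space `(X, σ)`
(standing for the unit sphere with surface measure), `u` is a function supported in `S₊`,
`uρ` its radial derivative and `gS` the norm of its tangential gradient. -/
theorem stmt16 {X : Type*} [MeasurableSpace X] (σ : Measure X)
    (n : ℕ) (hn : 3 ≤ n) (α : ℝ) (hα : 0 < α)
    (Splus : Set X) (hSplus : MeasurableSet Splus)
    (u uρ gS : X → ℝ)
    (hu : MemLp u 2 σ) (huρ : MemLp uρ 2 σ) (hgS : MemLp gS 2 σ)
    (hsupp : ∀ x ∉ Splus, u x = 0)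
    (hPoincare : ∫ x, gS x ^ 2 ∂σ ≥ (1 / α) * ∫ x, u x ^ 2 ∂σ)
    (β γ : ℝ)
    (hβ : β = (Real.sqrt α / 2) *
      (Real.sqrt (((n : ℝ) - 2) ^ 2 + 4 / α) - ((n : ℝ) - 2)))
    (hβ01 : β ∈ Set.Ioo (0 : ℝ) 1)
    (hγ : γ = β / Real.sqrt α) :
    ∫ x, (uρ x ^ 2 + gS x ^ 2) ∂σ ≥
      γ * (2 * (∫ x, |u x * uρ x| ∂σ) + ((n : ℝ) - 2) * ∫ x, u x ^ 2 ∂σ) := by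
  obtain ⟨hβ0, hβ1⟩ := hβ01
  have hsa : 0 < Real.sqrt α := Real.sqrt_pos.2 hα
  set A := ∫ x, uρ x ^ 2 ∂σ with hAdef
  set B := ∫ x, gS x ^ 2 ∂σ with hBdef
  set C := ∫ x, u x ^ 2 ∂σ with hCdef
  set I := ∫ x, |u x * uρ x| ∂σ with hIdef
  have hA : 0 ≤ A := integral_nonneg fun x => sq_nonneg _
  have hB : 0 ≤ B := integral_nonneg fun x => sq_nonneg _
  have hC : 0 ≤ C := integral_nonneg fun x => sq_nonneg _
  -- abbreviations for square roots
  set sa := Real.sqrt α with hsadef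
  set sA := Real.sqrt A with hsAdef
  set sB := Real.sqrt B with hsBdef
  set sC := Real.sqrt C with hsCdef
  have hsAnn : 0 ≤ sA := Real.sqrt_nonneg _
  have hsBnn : 0 ≤ sB := Real.sqrt_nonneg _
  have hsCnn : 0 ≤ sC := Real.sqrt_nonneg _
  have hA2 : sA ^ 2 = A := Real.sq_sqrt hA
  have hB2 : sB ^ 2 = B := Real.sq_sqrt hB
  have hC2 : sC ^ 2 = C := Real.sq_sqrt hC
  have hsa2 : sa ^ 2 = α := Real.sq_sqrt hα.le
  -- Cauchy–Schwarz : I ≤ sC * sA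
  have hpq : (2:ℝ).HolderConjugate 2 := (Real.holderConjugate_iff_eq_conjExponent one_lt_two).2 (by norm_num)
  have h2e : ENNReal.ofReal (2:ℝ) = 2 := by norm_num
  have hu2 : MemLp u (ENNReal.ofReal (2:ℝ)) σ := by rw [h2e]; exact hu
  have huρ2 : MemLp uρ (ENNReal.ofReal (2:ℝ)) σ := by rw [h2e]; exact huρ
  have hCS0 := MeasureTheory.integral_mul_norm_le_Lp_mul_Lq hpq hu2 huρ2
  have eI : ∫ a, ‖u a‖ * ‖uρ a‖ ∂σ = I := by
    rw [hIdef]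
    refine integral_congr_ae (Filter.Eventually.of_forall fun x => ?_)
    show ‖u x‖ * ‖uρ x‖ = |u x * uρ x|
    rw [Real.norm_eq_abs, Real.norm_eq_abs, abs_mul]
  have epow : ∀ f : X → ℝ, ∫ a, ‖f a‖ ^ (2:ℝ) ∂σ = ∫ a, f a ^ 2 ∂σ := by
    intro f
    refine integral_congr_ae (Filter.Eventually.of_forall fun x => ?_)
    show ‖f x‖ ^ (2:ℝ) = f x ^ 2
    rw [Real.norm_eq_abs, show ((2:ℝ)) = ((2:ℕ):ℝ) by norm_num, Real.rpow_natCast, sq_abs]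
  have hCS : I ≤ sC * sA := by
    have := hCS0
    rw [eI, epow u, epow uρ, ← hCdef, ← hAdef] at this
    rw [hsCdef, hsAdef, Real.sqrt_eq_rpow, Real.sqrt_eq_rpow]
    exact this
  -- Poincaré : sC ≤ sa * sB
  have hCB : sC ≤ sa * sB := by
    rw [hsCdef, hsadef, hsBdef, ← Real.sqrt_mul hα.le]
    refine Real.sqrt_le_sqrt ?_
    rw [ge_iff_le, one_div, inv_mul_le_iff₀ hα] at hPoincare
    exact hPoincare
  -- the algebraic identity : β² + (n-2)·√α·β = 1
  have hm : (1:ℝ) ≤ ((n:ℝ) - 2) := by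
    have : (3:ℝ) ≤ n := by exact_mod_cast hn
    linarith
  have hs2 : Real.sqrt (((n:ℝ)-2)^2 + 4/α) ^ 2 = ((n:ℝ)-2)^2 + 4/α :=
    Real.sq_sqrt (by positivity)
  have hs2' : Real.sqrt (((n:ℝ)-2)^2 + 4/α) ^ 2 * α = ((n:ℝ)-2)^2 * α + 4 := by
    rw [hs2]; field_simp
  have hid : β ^ 2 + ((n:ℝ) - 2) * sa * β = 1 := by
    rw [hβ]
    linear_combination ((Real.sqrt (((n:ℝ)-2)^2 + 4/α) - ((n:ℝ)-2))^2/4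
      + ((n:ℝ)-2)*(Real.sqrt (((n:ℝ)-2)^2 + 4/α) - ((n:ℝ)-2))/2) * hsa2 + (1/4) * hs2'
  -- rewrite LHS of the goal
  have hLHS : ∫ x, (uρ x ^ 2 + gS x ^ 2) ∂σ = A + B := by
    rw [hAdef, hBdef, ← integral_add]
    · exact (huρ.integrable_sq)
    · exact (hgS.integrable_sq)
  rw [hLHS, hγ, ge_iff_le, div_mul_eq_mul_div, div_le_iff₀ hsa]
  clear_value A B C I sa sA sB sC
  clear hCS0 hu2 huρ2 hu huρ hgS hsupp hPoincare eI epow hβ hγ hs2 hs2' hLHS hAdef hBdef hCdef hIdef hsadef hsAdef hsBdef hsCdef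
  -- now prove β * (2I + (n-2)C) ≤ (A + B) * sa
  have e3 : C ≤ sa ^ 2 * B := by
    nlinarith [mul_nonneg (sub_nonneg.2 hCB) (add_nonneg (mul_nonneg hsa.le hsBnn) hsCnn)]
  have e4 : 2 * β * sa * (sA * sB) ≤ sa * sA ^ 2 + sa * β ^ 2 * sB ^ 2 := by
    nlinarith [mul_nonneg hsa.le (sq_nonneg (sA - β * sB))]
  rw [hA2, hB2] at e4
  have e5 : 2 * β * I ≤ 2 * β * (sC * sA) :=
    mul_le_mul_of_nonneg_left hCS (by positivity)
  have e6 : sC * sA ≤ sa * sB * sA := mul_le_mul_of_nonneg_right hCB hsAnn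
  have e7 : 2 * β * (sC * sA) ≤ 2 * β * (sa * sB * sA) :=
    mul_le_mul_of_nonneg_left e6 (by positivity)
  have e8 : ((n:ℝ) - 2) * β * C ≤ ((n:ℝ) - 2) * β * (sa ^ 2 * B) :=
    mul_le_mul_of_nonneg_left e3 (by nlinarith)
  -- identity part : sa * B = sa * β² * B + (n-2) * β * sa² * B
  have e9 : sa * B = sa * β ^ 2 * B + ((n:ℝ) - 2) * β * (sa ^ 2 * B) := by
    linear_combination (-(sa * B)) * hid
  have e10 : 2 * β * sa * (sA * sB) = 2 * β * (sa * sB * sA) := by ring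
  linarith [e4, e5, e7, e8, e9, e10]
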